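/- arXiv:1404.0434 — 3 statements merged into one kernel-verified Lean document; each statement's English description precedes it below -/
import Mathlib

section
/- Let q ≥ 2 be a prime power and define π(q) = ∏_{i=1}^∞ (1 − q^{−i}). For all integers a, u, v, w with 0 ≤ a ≤ min{u, v}, v ≤ u, and u ≤ w (so that all quantities are defined), one has N₃(w,u,v,a) ≤ π(q)^{−1} · q^{u(u−a)} · q^{(v−a)(w−v)}. -/
/-- `V_I = {x ∈ F^n : i ∉ I → x i = 0}` -/
noncomputable def VI (F : Type) [Field F] (n : ℕ) (I : Finset (Fin n)) :
    Submodule F (Fin n → F) :=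
  Submodule.pi (↑I)ᶜ (fun _ => (⊥ : Submodule F F))

/-- the `t`-th relative generalized Hamming weight of `C₂ ⊆ C₁ ⊆ F^n` -/
noncomputable def RGHW (F : Type) [Field F] {n : ℕ} (t : ℕ)
    (C₁ C₂ : Submodule F (Fin n → F)) : ℕ :=
  sInf {d : ℕ | ∃ I : Finset (Fin n), I.card = d ∧
    Module.finrank F ↥(C₁ ⊓ VI F n I) ≥ Module.finrank F ↥(C₂ ⊓ VI F n I) + t}

/-- `π(q) = ∏_{i=1}^∞ (1 - q^{-i})` -/
noncomputable def piq (q : ℝ) : ℝ := ∏' i : ℕ, (1 - (q ^ (i + 1))⁻¹)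

/-- `N₁(w,u) = ∏_{i=0}^{u-1}(q^w - q^i) / ∏_{i=0}^{u-1}(q^u - q^i)` -/
noncomputable def N1 (q : ℝ) (w u : ℕ) : ℝ :=
  (∏ i ∈ Finset.range u, (q ^ w - q ^ i)) / (∏ i ∈ Finset.range u, (q ^ u - q ^ i))

/-- `N₂(w,u,v) = ∏_{i=0}^{v-1}(q^w - q^{u+i}) / ∏_{i=0}^{v-1}(q^v - q^i)` -/
noncomputable def N2 (q : ℝ) (w u v : ℕ) : ℝ :=
  (∏ i ∈ Finset.range v, (q ^ w - q ^ (u + i))) / (∏ i ∈ Finset.range v, (q ^ v - q ^ i))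

/-- `N₃(w,u,v,a) = N₁(u,a) · N₂(w-a, u-a, v-a)` -/
noncomputable def N3 (q : ℝ) (w u v a : ℕ) : ℝ :=
  N1 q u a * N2 q (w - a) (u - a) (v - a)


section AuxLemmas
open Finset

section Aux
variable {q : ℝ}

/-- finite Weierstrass inequality -/
lemma prod_one_sub_ge (g : ℕ → ℝ) (h0 : ∀ i, 0 ≤ g i) (h1 : ∀ i, g i ≤ 1) (n : ℕ) :
    1 - ∑ i ∈ range n, g i ≤ ∏ i ∈ range n, (1 - g i) := by
  induction n with
  | zero => simp
  | succ m ih =>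
    rw [prod_range_succ, sum_range_succ]
    have hs : 0 ≤ ∑ i ∈ range m, g i := sum_nonneg fun i _ => h0 i
    nlinarith [h0 m, h1 m, ih]

lemma two_le_pow (hq : 2 ≤ q) (i : ℕ) : (2:ℝ) ≤ q ^ (i+1) := by
  calc (2:ℝ) = 2^1 := (pow_one 2).symm
  _ ≤ 2^(i+1) := pow_le_pow_right₀ (by norm_num) (by omega)
  _ ≤ q^(i+1) := pow_le_pow_left₀ (by norm_num) hq _

lemma inv_pow_le_half (hq : 2 ≤ q) (i : ℕ) : (q ^ (i+1))⁻¹ ≤ 1/2 := by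
  rw [show (1/2 : ℝ) = 2⁻¹ by norm_num]
  exact inv_anti₀ (by norm_num) (two_le_pow hq i)

lemma half_le_f (hq : 2 ≤ q) (i : ℕ) : (1/2 : ℝ) ≤ 1 - (q ^ (i+1))⁻¹ := by
  have := inv_pow_le_half hq i; linarith

lemma f_le_one (hq : 2 ≤ q) (i : ℕ) : 1 - (q ^ (i+1))⁻¹ ≤ 1 := by
  have h2 := two_le_pow hq i
  have : 0 ≤ (q ^ (i+1))⁻¹ := inv_nonneg.2 (by linarith)
  linarith

/-- lower bound on partial products -/
lemma quarter_le_P (hq : 2 ≤ q) (n : ℕ) :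
    (1/4 : ℝ) ≤ ∏ i ∈ range n, (1 - (q ^ (i+1))⁻¹) := by
  cases n with
  | zero => norm_num
  | succ m =>
    rw [prod_range_succ']
    have hf0 : (1/2 : ℝ) ≤ 1 - (q ^ (0+1))⁻¹ := half_le_f hq 0
    have htail : (1/2 : ℝ) ≤ ∏ i ∈ range m, (1 - (q ^ (i+1+1))⁻¹) := by
      have hW := prod_one_sub_ge (fun i => (q ^ (i+1+1))⁻¹)
        (fun i => inv_nonneg.2 (by have := two_le_pow hq (i+1); linarith))
        (fun i => by have := inv_pow_le_half hq (i+1); linarith) m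
      have hsum : ∑ i ∈ range m, (q ^ (i+1+1))⁻¹ ≤ 1/2 := by
        calc ∑ i ∈ range m, (q ^ (i+1+1))⁻¹
            ≤ ∑ i ∈ range m, (1/2:ℝ)^(i+2) := by
              apply sum_le_sum
              intro i _
              rw [show ((1:ℝ)/2)^(i+2) = ((2:ℝ)^(i+2))⁻¹ by rw [div_pow]; norm_num]
              exact inv_anti₀ (by positivity)
                (pow_le_pow_left₀ (by norm_num) hq _)
        _ = (1/4) * ∑ i ∈ range m, (1/2:ℝ)^i := by
              rw [mul_sum]; apply sum_congr rfl; intro i _; ring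
        _ ≤ (1/4) * 2 := by
              have := sum_geometric_two_le m
              nlinarith
        _ = 1/2 := by norm_num
      linarith
    have h0 : (0:ℝ) ≤ ∏ i ∈ range m, (1 - (q ^ (i+1+1))⁻¹) := by linarith
    nlinarith

end Aux

section Piq
variable {q : ℝ}


lemma multipliable_f (hq : 2 ≤ q) (V : ℕ) :
    Multipliable (fun i : ℕ => 1 - (q ^ (i + V + 1))⁻¹) := by
  have hpos : ∀ i : ℕ, (0:ℝ) < 1 - (q ^ (i+1))⁻¹ := fun i => by
    have := half_le_f hq i; linarith
  have hlog : Summable fun i : ℕ => Real.log (1 - (q ^ (i + V + 1))⁻¹) := by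
    have hneg : Summable fun i : ℕ => -Real.log (1 - (q ^ (i + V + 1))⁻¹) := by
      apply Summable.of_nonneg_of_le
        (fun i => by
          have := Real.log_nonpos (by have := hpos (i+V); linarith) (f_le_one hq (i+V))
          linarith)
        (fun i => ?_) (summable_geometric_two)
      · have hfi := half_le_f hq (i+V)
        have hlog2 : Real.log ((1 - (q ^ (i+V+1))⁻¹)⁻¹) ≤ (1 - (q ^ (i+V+1))⁻¹)⁻¹ - 1 :=
          Real.log_le_sub_one_of_pos (by have := hpos (i+V); positivity)
        rw [Real.log_inv] at hlog2
        have hq2i : (q ^ (i+V+1))⁻¹ ≤ (1/2)^(i+V+1) := by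
          rw [show ((1:ℝ)/2)^(i+V+1) = ((2:ℝ)^(i+V+1))⁻¹ by rw [div_pow]; norm_num]
          exact inv_anti₀ (by positivity) (pow_le_pow_left₀ (by norm_num) hq _)
        have key : (1 - (q ^ (i+V+1))⁻¹)⁻¹ - 1 ≤ 2 * (q ^ (i+V+1))⁻¹ := by
          have h := hpos (i+V)
          rw [sub_le_iff_le_add, inv_le_iff_one_le_mul₀ h]
          have hx0 : (0:ℝ) ≤ (q ^ (i+V+1))⁻¹ := by positivity
          have hx2 := inv_pow_le_half hq (i+V)
          nlinarith [mul_nonneg hx0 (by linarith : (0:ℝ) ≤ 1 - 2 * (q ^ (i+V+1))⁻¹)]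
        have hhalf : ((1:ℝ)/2)^(i+V+1) ≤ (1/2)^(i+1) :=
          pow_le_pow_of_le_one (by norm_num) (by norm_num) (by omega)
        calc -Real.log (1 - (q ^ (i+V+1))⁻¹) ≤ 2 * (q ^ (i+V+1))⁻¹ := by linarith
        _ ≤ 2 * (1/2)^(i+1) := by linarith
        _ = (1/2)^i := by rw [pow_succ]; ring
    have := hneg.neg
    simpa using this
  exact Real.multipliable_of_summable_log (fun i => hpos (i+V)) hlog

lemma multipliable_f0 (hq : 2 ≤ q) : Multipliable (fun i : ℕ => 1 - (q ^ (i + 1))⁻¹) := by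
  have := multipliable_f hq 0
  simpa using this

lemma quarter_le_piq (hq : 2 ≤ q) : (1/4 : ℝ) ≤ piq q :=
  ge_of_tendsto' (multipliable_f0 hq).hasProd.tendsto_prod_nat (quarter_le_P hq)

lemma piq_le_P (hq : 2 ≤ q) (V : ℕ) : piq q ≤ ∏ i ∈ range V, (1 - (q ^ (i+1))⁻¹) := by
  have h := Multipliable.prod_mul_tprod_nat_mul'
    (f := fun i : ℕ => 1 - (q ^ (i+1))⁻¹) (k := V) (multipliable_f hq V)
  have htail : (∏' i : ℕ, (1 - (q ^ (i + V + 1))⁻¹)) ≤ 1 := by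
    refine le_of_tendsto' (multipliable_f hq V).hasProd (fun s => ?_)
    refine Finset.prod_le_one (fun i _ => ?_) (fun i _ => f_le_one hq (i + V))
    have := half_le_f hq (i + V); linarith
  have hP : (0:ℝ) ≤ ∏ i ∈ range V, (1 - (q ^ (i+1))⁻¹) := by
    have := quarter_le_P hq V; linarith
  rw [piq, ← h]
  calc (∏ i ∈ range V, (1 - (q ^ (i+1))⁻¹)) * ∏' i : ℕ, (1 - (q ^ (i + V + 1))⁻¹)
      ≤ (∏ i ∈ range V, (1 - (q ^ (i+1))⁻¹)) * 1 :=
        mul_le_mul_of_nonneg_left htail hP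
  _ = _ := mul_one _

end Piq


section Alg
variable {q : ℝ}

noncomputable def Gq (q : ℝ) (m : ℕ) : ℝ := ∏ j ∈ range m, (q^(j+1) - 1)

lemma Gq_pos (hq : 2 ≤ q) (m : ℕ) : 0 < Gq q m :=
  prod_pos fun j _ => by have := two_le_pow hq j; linarith

lemma prod_qpow_sub (m a : ℕ) (ham : a ≤ m) :
    ∏ i ∈ range a, (q^m - q^i) =
      (∏ i ∈ range a, q^i) * (∏ i ∈ range a, (q^(m-i) - 1)) := by
  rw [← prod_mul_distrib]
  refine prod_congr rfl fun i hi => ?_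
  have h1 : i ≤ m := le_trans (le_of_lt (mem_range.1 hi)) ham
  rw [mul_sub, mul_one, ← pow_add, Nat.add_sub_cancel' h1]

lemma prod_shift (m a : ℕ) (ham : a ≤ m) :
    ∏ i ∈ range a, (q^(m-i) - 1) = ∏ i ∈ range a, (q^((m-a)+i+1) - 1) := by
  rw [← Finset.prod_range_reflect (fun i => q^((m-a)+i+1) - 1) a]
  refine prod_congr rfl fun i hi => ?_
  have hi' := mem_range.1 hi
  have : m - a + (a - 1 - i) + 1 = m - i := by omega
  rw [this]

lemma Gq_split (m a : ℕ) (ham : a ≤ m) :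
    Gq q m = Gq q (m-a) * ∏ i ∈ range a, (q^((m-a)+i+1) - 1) := by
  have h := Finset.prod_range_add (fun j => q^(j+1) - 1) (m-a) a
  calc Gq q m = ∏ j ∈ range ((m-a)+a), (q^(j+1) - 1) := by rw [Nat.sub_add_cancel ham]; rfl
  _ = _ := h

lemma N1_eq (hq : 2 ≤ q) (u a : ℕ) (hau : a ≤ u) :
    N1 q u a = Gq q u / (Gq q a * Gq q (u-a)) := by
  have hq0 : (0:ℝ) < q := by linarith
  have hP : (0:ℝ) < ∏ i ∈ range a, q^i := prod_pos fun i _ => pow_pos hq0 i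
  have hnum : ∏ i ∈ range a, (q^u - q^i) =
      (∏ i ∈ range a, q^i) * (Gq q u / Gq q (u-a)) := by
    rw [prod_qpow_sub u a hau, prod_shift u a hau]
    congr 1
    rw [Gq_split u a hau]
    field_simp [ne_of_gt (Gq_pos hq (u-a))]
  have hden : ∏ i ∈ range a, (q^a - q^i) = (∏ i ∈ range a, q^i) * Gq q a := by
    rw [prod_qpow_sub a a le_rfl, prod_shift a a le_rfl]
    congr 1
    rw [Gq]
    refine prod_congr rfl fun i hi => ?_
    congr 2
    omega
  rw [N1, hnum, hden]
  field_simp [ne_of_gt hP, ne_of_gt (Gq_pos hq a), ne_of_gt (Gq_pos hq (u-a))]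

lemma N1_symm (hq : 2 ≤ q) (u a : ℕ) (hau : a ≤ u) : N1 q u a = N1 q u (u-a) := by
  rw [N1_eq hq u a hau, N1_eq hq u (u-a) (Nat.sub_le u a), Nat.sub_sub_self hau, mul_comm]

lemma N1_le (hq : 2 ≤ q) (u b : ℕ) (hbu : b ≤ u) : N1 q u b ≤ q^(u*b) := by
  have hq0 : (0:ℝ) < q := by linarith
  have hfac : ∀ i ∈ range b, (1:ℝ) ≤ q^b - q^i := by
    intro i hi
    have hi' := mem_range.1 hi
    have h1 : q^(i+1) ≤ q^b := pow_le_pow_right₀ (by linarith) (by omega)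
    have h2 : (1:ℝ) ≤ q^i := one_le_pow₀ (by linarith)
    have h3 : q * q^i = q^(i+1) := by rw [pow_succ]; ring
    nlinarith
  have hB : (1:ℝ) ≤ ∏ i ∈ range b, (q^b - q^i) := by
    have := Finset.prod_le_prod (s := range b) (f := fun _ => (1:ℝ))
      (g := fun i => q^b - q^i) (fun i _ => by norm_num) hfac
    simpa using this
  have hA : ∏ i ∈ range b, (q^u - q^i) ≤ q^(u*b) := by
    calc ∏ i ∈ range b, (q^u - q^i) ≤ ∏ i ∈ range b, q^u := by
          refine Finset.prod_le_prod (fun i hi => ?_) (fun i hi => ?_)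
          · have hi' := mem_range.1 hi
            have : q^i ≤ q^u := pow_le_pow_right₀ (by linarith) (by omega)
            linarith
          · have : (0:ℝ) ≤ q^i := le_of_lt (pow_pos hq0 i)
            linarith
    _ = q^(u*b) := by rw [prod_const, card_range, ← pow_mul]
  have hA0 : (0:ℝ) ≤ ∏ i ∈ range b, (q^u - q^i) := by
    refine prod_nonneg fun i hi => ?_
    have hi' := mem_range.1 hi
    have : q^i ≤ q^u := pow_le_pow_right₀ (by linarith) (by omega)
    linarith
  rw [N1]
  calc _ ≤ (∏ i ∈ range b, (q^u - q^i)) := div_le_self hA0 hB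
  _ ≤ q^(u*b) := hA

lemma N1_nonneg (hq : 2 ≤ q) (u a : ℕ) (hau : a ≤ u) : 0 ≤ N1 q u a := by
  have hq0 : (0:ℝ) < q := by linarith
  refine div_nonneg (prod_nonneg fun i hi => ?_) (le_of_lt (prod_pos fun i hi => ?_))
  · have hi' := mem_range.1 hi
    have : q^i ≤ q^u := pow_le_pow_right₀ (by linarith) (by omega)
    linarith
  · have : q^i < q^a := pow_lt_pow_right₀ (by linarith) (mem_range.1 hi)
    linarith

lemma N1_le_main (hq : 2 ≤ q) (u a : ℕ) (hau : a ≤ u) : N1 q u a ≤ q^(u*(u-a)) := by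
  rw [N1_symm hq u a hau]
  exact N1_le hq u (u-a) (Nat.sub_le u a)
end Alg

section N2sec
variable {q : ℝ}

lemma den_eq (hq : 2 ≤ q) (V : ℕ) :
    ∏ i ∈ range V, (q^V - q^i) = q^(V*V) * ∏ i ∈ range V, (1 - (q ^ (i+1))⁻¹) := by
  have hq0 : (0:ℝ) < q := by linarith
  have step : ∀ i ∈ range V, q^V - q^i = q^V * (1 - (q^(V-i))⁻¹) := by
    intro i hi
    have hi' := mem_range.1 hi
    have hsplit : q^i * q^(V-i) = q^V := by rw [← pow_add]; congr 1; omega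
    have hpow : (0:ℝ) < q^(V-i) := pow_pos hq0 _
    field_simp
    nlinarith [hsplit]
  rw [prod_congr rfl step, prod_mul_distrib, prod_const, card_range, ← pow_mul]
  congr 1
  rw [← Finset.prod_range_reflect (fun i => 1 - (q^(i+1))⁻¹) V]
  refine prod_congr rfl fun i hi => ?_
  have hi' := mem_range.1 hi
  have h : V - i = V - 1 - i + 1 := by omega
  rw [h]

lemma N2_nonneg (hq : 2 ≤ q) (W U V : ℕ) (hVU : V ≤ U) (hUW : U ≤ W) :
    0 ≤ N2 q W U V := by
  have hq0 : (0:ℝ) < q := by linarith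
  have hden : (0:ℝ) < ∏ i ∈ range V, (q^V - q^i) := prod_pos fun i hi => by
    have : q^i < q^V := pow_lt_pow_right₀ (by linarith) (mem_range.1 hi)
    linarith
  by_cases hcase : W - U < V
  · have hz : ∏ i ∈ range V, (q^W - q^(U+i)) = 0 := by
      refine prod_eq_zero (mem_range.2 hcase) ?_
      rw [Nat.add_sub_cancel' hUW]; ring
    rw [N2, hz, zero_div]
  · push_neg at hcase
    refine div_nonneg (prod_nonneg fun i hi => ?_) hden.le
    have hi' := mem_range.1 hi
    have : q^(U+i) ≤ q^W := pow_le_pow_right₀ (by linarith) (by omega)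
    linarith

lemma N2_le (hq : 2 ≤ q) (W U V : ℕ) (hVU : V ≤ U) (hUW : U ≤ W) :
    N2 q W U V ≤ (piq q)⁻¹ * q^(V*(W-V)) := by
  have hq0 : (0:ℝ) < q := by linarith
  have hpiq : (0:ℝ) < piq q := lt_of_lt_of_le (by norm_num) (quarter_le_piq hq)
  have hpiqinv : (0:ℝ) < (piq q)⁻¹ := by positivity
  have hden : (0:ℝ) < ∏ i ∈ range V, (q^V - q^i) := prod_pos fun i hi => by
    have : q^i < q^V := pow_lt_pow_right₀ (by linarith) (mem_range.1 hi)
    linarith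
  by_cases hcase : W - U < V
  · have hz : ∏ i ∈ range V, (q^W - q^(U+i)) = 0 := by
      refine prod_eq_zero (mem_range.2 hcase) ?_
      rw [Nat.add_sub_cancel' hUW]; ring
    rw [N2, hz, zero_div]
    positivity
  · push_neg at hcase
    have hnum : ∏ i ∈ range V, (q^W - q^(U+i)) ≤ q^(W*V) := by
      calc ∏ i ∈ range V, (q^W - q^(U+i)) ≤ ∏ i ∈ range V, q^W := by
            refine Finset.prod_le_prod (fun i hi => ?_) (fun i hi => ?_)
            · have hi' := mem_range.1 hi
              have : q^(U+i) ≤ q^W := pow_le_pow_right₀ (by linarith) (by omega)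
              linarith
            · have : (0:ℝ) ≤ q^(U+i) := le_of_lt (pow_pos hq0 _)
              linarith
      _ = q^(W*V) := by rw [prod_const, card_range, ← pow_mul]
    have hP : (0:ℝ) < ∏ i ∈ range V, (1 - (q ^ (i+1))⁻¹) :=
      lt_of_lt_of_le (by norm_num) (quarter_le_P hq V)
    have hPpiq : (∏ i ∈ range V, (1 - (q ^ (i+1))⁻¹))⁻¹ ≤ (piq q)⁻¹ :=
      inv_anti₀ hpiq (piq_le_P hq V)
    have hVW : V*(W-V) + V*V = W*V := by
      have hVW' : V ≤ W := le_trans hVU hUW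
      calc V*(W-V) + V*V = V*((W-V)+V) := by ring
      _ = V*W := by rw [Nat.sub_add_cancel hVW']
      _ = W*V := by ring
    have hqWV : q^(W*V) = q^(V*(W-V)) * q^(V*V) := by rw [← pow_add, hVW]
    rw [N2, den_eq hq V]
    rw [div_le_iff₀ (by positivity)]
    calc ∏ i ∈ range V, (q^W - q^(U+i)) ≤ q^(W*V) := hnum
    _ = q^(V*(W-V)) * q^(V*V) := hqWV
    _ ≤ ((piq q)⁻¹ * q^(V*(W-V))) * (q^(V*V) * ∏ i ∈ range V, (1 - (q ^ (i+1))⁻¹)) := by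
        have h1 : (1:ℝ) ≤ (piq q)⁻¹ * ∏ i ∈ range V, (1 - (q ^ (i+1))⁻¹) := by
          rw [← div_eq_inv_mul, le_div_iff₀ hpiq, one_mul]
          exact piq_le_P hq V
        calc q^(V*(W-V)) * q^(V*V) = q^(V*(W-V)) * q^(V*V) * 1 := (mul_one _).symm
        _ ≤ q^(V*(W-V)) * q^(V*V) * ((piq q)⁻¹ * ∏ i ∈ range V, (1 - (q ^ (i+1))⁻¹)) :=
            mul_le_mul_of_nonneg_left h1 (by positivity)
        _ = _ := by ring
end N2sec

end AuxLemmas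

/-- Upper bound on `N₃(w,u,v,a)`. -/
theorem N3_bound (q : ℕ) (hq2 : 2 ≤ q) (hq : ∃ p k : ℕ, p.Prime ∧ 1 ≤ k ∧ q = p ^ k)
    (w u v a : ℕ) (hau : a ≤ u) (hav : a ≤ v) (hvu : v ≤ u) (huw : u ≤ w) :
    N3 (q : ℝ) w u v a ≤
      (piq (q : ℝ))⁻¹ * (q : ℝ) ^ (u * (u - a)) * (q : ℝ) ^ ((v - a) * (w - v)) := by
  have hq : (2:ℝ) ≤ (q:ℝ) := by exact_mod_cast hq2
  have hq0 : (0:ℝ) < (q:ℝ) := by linarith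
  have h1 := N1_le_main hq u a hau
  have h1n := N1_nonneg hq u a hau
  have h2 := N2_le hq (w-a) (u-a) (v-a) (by omega) (by omega)
  have h2n := N2_nonneg hq (w-a) (u-a) (v-a) (by omega) (by omega)
  have hexp : (w - a) - (v - a) = w - v := by omega
  rw [hexp] at h2
  have hpiq : (0:ℝ) < piq (q:ℝ) := lt_of_lt_of_le (by norm_num) (quarter_le_piq hq)
  rw [N3]
  calc N1 (q:ℝ) u a * N2 (q:ℝ) (w-a) (u-a) (v-a)
      ≤ (q:ℝ)^(u*(u-a)) * ((piq (q:ℝ))⁻¹ * (q:ℝ)^((v-a)*(w-v))) :=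
        mul_le_mul h1 h2 h2n (by positivity)
  _ = (piq (q:ℝ))⁻¹ * (q:ℝ)^(u*(u-a)) * (q:ℝ)^((v-a)*(w-v)) := by ring
end

section
/- (Singleton bound for RGHW) Let q be a prime power and let C2 ⊆ C1 ⊆ F_q^n be nested linear codes. For every integer t with 1 ≤ t ≤ dim C1 − dim C2, it holds that M_t(C1, C2) + dim C1 ≤ n + t. -/
open Module

lemma mem_VI (F : Type) [Field F] {n : ℕ} {I : Finset (Fin n)} {v : Fin n → F} :
    v ∈ VI F n I ↔ ∀ i, i ∉ I → v i = 0 := by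
  simp [VI, Submodule.mem_pi]

lemma VI_mono (F : Type) [Field F] {n : ℕ} {I J : Finset (Fin n)} (h : I ⊆ J) :
    VI F n I ≤ VI F n J := by
  intro v hv
  rw [mem_VI] at hv ⊢
  exact fun i hi => hv i (fun hI => hi (h hI))

lemma finrank_VI (F : Type) [Field F] (n : ℕ) (I : Finset (Fin n)) :
    finrank F (VI F n I) = I.card := by
  have e : VI F n I ≃ₗ[F] (↥I → F) := by
    refine LinearEquiv.ofBijective
      { toFun := fun v i => v.1 i.1
        map_add' := fun a b => rfl
        map_smul' := fun c a => rfl } ⟨?_, ?_⟩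
    · intro a b hab
      ext j
      by_cases hj : j ∈ I
      · exact congrFun hab ⟨j, hj⟩
      · rw [(mem_VI F).mp a.2 j hj, (mem_VI F).mp b.2 j hj]
    · intro f
      refine ⟨⟨fun j => if h : j ∈ I then f ⟨j, h⟩ else 0, ?_⟩, ?_⟩
      · rw [mem_VI]; intro i hi; simp [hi]
      · ext i; simp [i.2]
  rw [e.finrank_eq]
  simp [Module.finrank_fintype_fun_eq_card]

lemma exists_vanishing (F : Type) [Field F] (n : ℕ) (C : Submodule F (Fin n → F)) :
    ∃ S : Finset (Fin n), S.card = n - finrank F C ∧ C ⊓ VI F n S = ⊥ := by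
  suffices H : ∀ k (C : Submodule F (Fin n → F)), finrank F C = k →
      ∃ S : Finset (Fin n), S.card = n - k ∧ C ⊓ VI F n S = ⊥ by
    obtain ⟨S, h1, h2⟩ := H (finrank F C) C rfl
    exact ⟨S, h1, h2⟩
  intro k
  induction k with
  | zero =>
    intro C h
    refine ⟨Finset.univ, by simp, ?_⟩
    have : C = ⊥ := Submodule.finrank_eq_zero.mp h
    simp [this]
  | succ k ih =>
    intro C h
    have hC : C ≠ ⊥ := by
      intro hbot; rw [hbot] at h; simp at h
    obtain ⟨x, hxC, hx0⟩ := Submodule.exists_mem_ne_zero_of_ne_bot hC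
    obtain ⟨i, hxi⟩ : ∃ i, x i ≠ 0 := by
      by_contra hc; push_neg at hc; exact hx0 (funext hc)
    set φ : C →ₗ[F] F := (LinearMap.proj i).comp C.subtype with hφ
    have hsurj : LinearMap.range φ = ⊤ := by
      rw [LinearMap.range_eq_top]
      intro c
      refine ⟨(c * (x i)⁻¹) • ⟨x, hxC⟩, ?_⟩
      simp [hφ, mul_assoc, inv_mul_cancel₀ hxi]
    have hker : finrank F (LinearMap.ker φ) = k := by
      have := φ.finrank_range_add_finrank_ker
      rw [hsurj, h] at this
      simp at this
      omega
    set C' : Submodule F (Fin n → F) := (LinearMap.ker φ).map C.subtype with hC'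
    have hC'rank : finrank F C' = k := by
      rw [hC', Submodule.finrank_map_subtype_eq]
      exact hker
    obtain ⟨S', hS'card, hS'⟩ := ih C' hC'rank
    have hle : n - (k + 1) ≤ (S'.erase i).card := by
      have := Finset.pred_card_le_card_erase (s := S') (a := i)
      omega
    obtain ⟨S, hSsub, hScard⟩ := Finset.exists_subset_card_eq hle
    refine ⟨S, hScard, ?_⟩
    rw [eq_bot_iff]
    rintro v ⟨hvC, hvS⟩
    have hiS : i ∉ S := fun hi => (Finset.notMem_erase i S') (hSsub hi)
    have hvi : v i = 0 := (mem_VI F).mp hvS i hiS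
    have hvC' : v ∈ C' := by
      rw [hC']
      exact ⟨⟨v, hvC⟩, by simpa [hφ] using hvi, rfl⟩
    have : v ∈ C' ⊓ VI F n S' :=
      ⟨hvC', VI_mono F (hSsub.trans (Finset.erase_subset i S')) hvS⟩
    rw [hS'] at this
    exact this


/-- Singleton bound for relative generalized Hamming weight. -/
theorem rghw_singleton_bound (F : Type) [Field F] [Fintype F] (n : ℕ)
    (C₁ C₂ : Submodule F (Fin n → F)) (hC : C₂ ≤ C₁) (t : ℕ)
    (ht1 : 1 ≤ t) (ht2 : t ≤ Module.finrank F C₁ - Module.finrank F C₂) :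
    RGHW F t C₁ C₂ + Module.finrank F C₁ ≤ n + t := by
  set k₁ := finrank F C₁ with hk₁
  set k₂ := finrank F C₂ with hk₂
  have hk2le : k₂ ≤ k₁ := Submodule.finrank_mono hC
  have hk1n : k₁ ≤ n := by
    have := Submodule.finrank_le C₁
    rwa [Module.finrank_fintype_fun_eq_card, Fintype.card_fin] at this
  have hkt : k₂ + t ≤ k₁ := by omega
  obtain ⟨S, hScard, hSbot⟩ := exists_vanishing F n C₂
  have hle : n - k₁ + t ≤ S.card := by omega
  obtain ⟨I, hIsub, hIcard⟩ := Finset.exists_subset_card_eq hle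
  have hC2I : finrank F ↥(C₂ ⊓ VI F n I) = 0 := by
    have hb : C₂ ⊓ VI F n I = ⊥ := by
      rw [eq_bot_iff, ← hSbot]
      exact inf_le_inf_left C₂ (VI_mono F hIsub)
    rw [hb]; exact finrank_bot F _
  have hC1I : finrank F ↥(C₁ ⊓ VI F n I) ≥ t := by
    have hsum := Submodule.finrank_sup_add_finrank_inf_eq C₁ (VI F n I)
    have hsup : finrank F ↥(C₁ ⊔ VI F n I) ≤ n := by
      have := Submodule.finrank_le (C₁ ⊔ VI F n I)
      rwa [Module.finrank_fintype_fun_eq_card, Fintype.card_fin] at this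
    rw [finrank_VI] at hsum
    omega
  have hmem : (n - k₁ + t) ∈ {d : ℕ | ∃ I : Finset (Fin n), I.card = d ∧
      Module.finrank F ↥(C₁ ⊓ VI F n I) ≥ Module.finrank F ↥(C₂ ⊓ VI F n I) + t} :=
    ⟨I, hIcard, by omega⟩
  have := Nat.sInf_le hmem
  rw [RGHW] at *
  omega
end

section
/- Let q be a prime power, t a positive integer, and let integers n, d satisfy t ≤ d ≤ n. Then there exist nested linear codes C2 ⊆ C1 ⊆ F_q^n with dim C1 = n + t − d, dim C2 = n − d, and M_t(C1, C2) = d. In particular, taking d = ⌊nδ⌋ for a given 0 ≤ δ ≤ 1 with t ≤ ⌊nδ⌋, there are codes with dim C1 = n + t − ⌊nδ⌋, dim C2 = n − ⌊nδ⌋, and M_t(C1, C2) = ⌊nδ⌋. -/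
namespace RGHWaux

lemma mem_VI {F : Type} [Field F] {n : ℕ} {I : Finset (Fin n)} {x : Fin n → F} :
    x ∈ VI F n I ↔ ∀ i, i ∉ I → x i = 0 := by
  simp [VI, Submodule.mem_pi]

variable {F : Type} [Field F] {n : ℕ}

/-- restriction map as a linear map -/
noncomputable def resMap (C : Submodule F (Fin n → F)) (S : Finset (Fin n)) :
    ↥C →ₗ[F] (↥(S : Finset (Fin n)) → F) where
  toFun x := fun i => x.1 i.1
  map_add' _ _ := rfl
  map_smul' _ _ := rfl

lemma finrank_eq_of_res (C : Submodule F (Fin n → F)) (S : Finset (Fin n))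
    (hinj : ∀ x ∈ C, (∀ i ∈ S, x i = 0) → x = 0)
    (hsurj : ∀ g : ↥S → F, ∃ x ∈ C, ∀ i : ↥S, x i.1 = g i) :
    Module.finrank F C = S.card := by
  have hb : Function.Bijective (resMap C S) := by
    constructor
    · intro x y hxy
      have : x.1 - y.1 = 0 := hinj _ (sub_mem x.2 y.2) (fun i hi => by
        have := congrFun hxy ⟨i, hi⟩
        simp only [resMap, LinearMap.coe_mk, AddHom.coe_mk] at this
        simp [this])
      ext1; exact sub_eq_zero.mp this
    · intro g
      obtain ⟨x, hx, hg⟩ := hsurj g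
      exact ⟨⟨x, hx⟩, funext fun i => hg i⟩
  rw [LinearEquiv.finrank_eq (LinearEquiv.ofBijective _ hb), Module.finrank_pi,
    Fintype.card_coe]

set_option synthInstance.maxHeartbeats 400000 in
lemma finrank_le_of_res (C D : Submodule F (Fin n → F)) (S : Finset (Fin n))
    (h : ∀ x ∈ C, (∀ i ∈ S, x i = 0) → x ∈ D) :
    Module.finrank F C ≤ Module.finrank F D + S.card := by
  have hrn := LinearMap.finrank_range_add_finrank_ker (resMap C S)
  have h1 : Module.finrank F ↥(LinearMap.range (resMap C S)) ≤ S.card := by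
    simpa [Module.finrank_pi, Fintype.card_coe] using
      (LinearMap.range (resMap C S)).finrank_le
  have h2 : Module.finrank F ↥(LinearMap.ker (resMap C S)) ≤ Module.finrank F D := by
    apply LinearMap.finrank_le_finrank_of_injective
      (f := { toFun := fun x : ↥(LinearMap.ker (resMap C S)) =>
                (⟨x.1.1, h _ x.1.2 (fun i hi => congrFun x.2 ⟨i, hi⟩)⟩ : ↥D),
              map_add' := fun _ _ => Subtype.ext (by rfl), map_smul' := fun _ _ => Subtype.ext (by rfl) })
    intro x y hxy
    have h' : (x.1.1 : Fin n → F) = y.1.1 := congrArg (Subtype.val : ↥D → (Fin n → F)) hxy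
    exact Subtype.ext (Subtype.ext h')
  omega

lemma card_filter_lt {m : ℕ} (hm : m ≤ n) :
    (Finset.univ.filter (fun i : Fin n => i.1 < m)).card = m := by
  have : (Finset.univ.filter (fun i : Fin n => i.1 < m))
      = Finset.map (Fin.castLEEmb hm) Finset.univ := by
    ext i
    simp only [Finset.mem_filter, Finset.mem_univ, true_and, Finset.mem_map,
      Fin.castLEEmb, Function.Embedding.coeFn_mk]
    constructor
    · intro h; exact ⟨⟨i.1, h⟩, Fin.ext rfl⟩
    · rintro ⟨j, rfl⟩; exact j.2
  rw [this, Finset.card_map, Finset.card_univ, Fintype.card_fin]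

lemma card_filter_band {l m : ℕ} (hlm : l ≤ m) (hm : m ≤ n) :
    (Finset.univ.filter (fun i : Fin n => l ≤ i.1 ∧ i.1 < m)).card = m - l := by
  have hsub : (Finset.univ.filter (fun i : Fin n => i.1 < l))
      ⊆ (Finset.univ.filter (fun i : Fin n => i.1 < m)) := by
    intro i hi
    simp only [Finset.mem_filter, Finset.mem_univ, true_and] at hi ⊢
    omega
  have : (Finset.univ.filter (fun i : Fin n => l ≤ i.1 ∧ i.1 < m))
      = (Finset.univ.filter (fun i : Fin n => i.1 < m))
        \ (Finset.univ.filter (fun i : Fin n => i.1 < l)) := by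
    ext i
    simp only [Finset.mem_filter, Finset.mem_univ, true_and, Finset.mem_sdiff]
    omega
  rw [this, Finset.card_sdiff_of_subset hsub, card_filter_lt hm, card_filter_lt (le_trans hlm hm)]

/-- the main construction -/
theorem main (F : Type) [Field F] (n t d : ℕ) (ht : 1 ≤ t) (htd : t ≤ d) (hdn : d ≤ n) :
    ∃ C₁ C₂ : Submodule F (Fin n → F), C₂ ≤ C₁ ∧
      Module.finrank F C₁ = n + t - d ∧ Module.finrank F C₂ = n - d ∧
      RGHW F t C₁ C₂ = d := by
  set a : ℕ := n - d with ha_def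
  have hat : a + t ≤ n := by omega
  have han : a < n := by omega
  set aF : Fin n := ⟨a, han⟩ with haF
  -- the codes
  set C₁ : Submodule F (Fin n → F) :=
    { carrier := {x | ∀ i : Fin n, a + t ≤ i.1 → x i = x aF},
      add_mem' := fun hx hy i hi => by simp [hx i hi, hy i hi],
      zero_mem' := fun i _ => rfl,
      smul_mem' := fun c x hx i hi => by simp [hx i hi] } with hC₁
  set C₂ : Submodule F (Fin n → F) :=
    { carrier := {x | ∀ i : Fin n, a ≤ i.1 → x i = 0},
      add_mem' := fun hx hy i hi => by simp [hx i hi, hy i hi],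
      zero_mem' := fun i _ => rfl,
      smul_mem' := fun c x hx i hi => by simp [hx i hi] } with hC₂
  have hmem₁ : ∀ x, x ∈ C₁ ↔ ∀ i : Fin n, a + t ≤ i.1 → x i = x aF := fun x => Iff.rfl
  have hmem₂ : ∀ x, x ∈ C₂ ↔ ∀ i : Fin n, a ≤ i.1 → x i = 0 := fun x => Iff.rfl
  have hle : C₂ ≤ C₁ := by
    intro x hx i hi
    rw [hx i (by omega), hx aF (le_refl a)]
  refine ⟨C₁, C₂, hle, ?_, ?_, ?_⟩
  · -- finrank C₁ = n + t - d
    have haFlt : (aF : Fin n).1 < a + t := by show a < a + t; omega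
    have haFmem : aF ∈ Finset.univ.filter (fun i : Fin n => i.1 < a + t) := by
      simp only [Finset.mem_filter, Finset.mem_univ, true_and]; exact haFlt
    rw [finrank_eq_of_res C₁ (Finset.univ.filter (fun i : Fin n => i.1 < a + t)) ?_ ?_,
      card_filter_lt hat]
    · omega
    · intro x hx hz
      funext i
      simp only [Pi.zero_apply]
      by_cases hi : i.1 < a + t
      · exact hz i (by simp only [Finset.mem_filter, Finset.mem_univ, true_and]; exact hi)
      · rw [hx i (by omega), hz aF haFmem]
    · intro g
      refine ⟨fun i => if h : i.1 < a + t then g ⟨i, by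
          simp only [Finset.mem_filter, Finset.mem_univ, true_and]; exact h⟩
        else g ⟨aF, haFmem⟩, ?_, ?_⟩
      · intro i hi
        have h1 : ¬ (i.1 < a + t) := by omega
        simp only [h1, dif_neg, not_false_iff, haFlt, dif_pos]
      · intro i
        have hi : (i.1 : Fin n).1 < a + t := by
          have := i.2; simp only [Finset.mem_coe, Finset.mem_filter] at this; exact this.2
        simp only [hi, dif_pos]
  · -- finrank C₂ = n - d
    rw [finrank_eq_of_res C₂ (Finset.univ.filter (fun i : Fin n => i.1 < a)) ?_ ?_,
      card_filter_lt (by omega)]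
    · intro x hx hz
      funext i
      simp only [Pi.zero_apply]
      by_cases hi : i.1 < a
      · exact hz i (by simp only [Finset.mem_filter, Finset.mem_univ, true_and]; exact hi)
      · exact hx i (by omega)
    · intro g
      refine ⟨fun i => if h : i.1 < a then g ⟨i, by
          simp only [Finset.mem_filter, Finset.mem_univ, true_and]; exact h⟩ else 0, ?_, ?_⟩
      · intro i hi
        have h1 : ¬ (i.1 < a) := by omega
        simp only [h1, dif_neg, not_false_iff]
      · intro i
        have hi : (i.1 : Fin n).1 < a := by
          have := i.2; simp only [Finset.mem_coe, Finset.mem_filter] at this; exact this.2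
        simp only [hi, dif_pos]
  · -- RGHW = d
    set L : Finset (Fin n) := Finset.univ.filter (fun i : Fin n => a ≤ i.1) with hL
    have hLmem : ∀ i : Fin n, i ∈ L ↔ a ≤ i.1 := by
      intro i; simp only [hL, Finset.mem_filter, Finset.mem_univ, true_and]
    have hLcard : L.card = d := by
      have : L = Finset.univ.filter (fun i : Fin n => a ≤ i.1 ∧ i.1 < n) := by
        ext i
        simp only [hL, Finset.mem_filter, Finset.mem_univ, true_and]
        exact ⟨fun h => ⟨h, i.2⟩, fun h => h.1⟩
      rw [this, card_filter_band (by omega) (le_refl n)]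
      omega
    -- the mid band
    set Smid : Finset (Fin n) :=
      Finset.univ.filter (fun i : Fin n => a ≤ i.1 ∧ i.1 < a + t) with hSmid
    have hSmidmem : ∀ i : Fin n, i ∈ Smid ↔ a ≤ i.1 ∧ i.1 < a + t := by
      intro i; simp only [hSmid, Finset.mem_filter, Finset.mem_univ, true_and]
    have hSmidcard : Smid.card = t := by
      rw [hSmid, card_filter_band (by omega) hat]; omega
    have haFmid : aF ∈ Smid := (hSmidmem aF).mpr ⟨le_refl a, by show a < a + t; omega⟩
    -- finrank (C₂ ⊓ VI L) = 0
    have hbot : C₂ ⊓ VI F n L = ⊥ := by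
      rw [eq_bot_iff]
      rintro x ⟨hx2, hxV⟩
      rw [Submodule.mem_bot]
      funext i
      simp only [Pi.zero_apply]
      by_cases hi : a ≤ i.1
      · exact hx2 i hi
      · exact (mem_VI.mp hxV) i (fun hmem => hi ((hLmem i).mp hmem))
    have hrank2 : Module.finrank F ↥(C₂ ⊓ VI F n L) = 0 := by
      rw [hbot]; exact finrank_bot F _
    -- finrank (C₁ ⊓ VI L) = t
    have hrank1 : Module.finrank F ↥(C₁ ⊓ VI F n L) = t := by
      rw [finrank_eq_of_res _ Smid ?_ ?_, hSmidcard]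
      · rintro x ⟨hx1, hxV⟩ hz
        funext i
        simp only [Pi.zero_apply]
        by_cases hi : a ≤ i.1
        · by_cases hi2 : i.1 < a + t
          · exact hz i ((hSmidmem i).mpr ⟨hi, hi2⟩)
          · rw [hx1 i (by omega)]
            exact hz aF haFmid
        · exact (mem_VI.mp hxV) i (fun hmem => hi ((hLmem i).mp hmem))
      · intro g
        refine ⟨fun i => if h : a ≤ i.1 ∧ i.1 < a + t then g ⟨i, (hSmidmem i).mpr h⟩
            else if a + t ≤ i.1 then g ⟨aF, haFmid⟩ else 0, ⟨?_, ?_⟩, ?_⟩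
        · -- membership in C₁
          intro i hi
          have h1 : ¬ (a ≤ i.1 ∧ i.1 < a + t) := by omega
          have h2 : a ≤ (aF : Fin n).1 ∧ (aF : Fin n).1 < a + t := ⟨le_refl a, by show a < a + t; omega⟩
          simp only [h1, dif_neg, not_false_iff, if_pos hi, h2, dif_pos, and_self, dite_true]
        · -- membership in VI L
          refine mem_VI.mpr fun i hi => ?_
          have hia : i.1 < a := by
            by_contra hc
            exact hi ((hLmem i).mpr (by omega))
          have h1 : ¬ (a ≤ i.1 ∧ i.1 < a + t) := by omega
          have h2 : ¬ (a + t ≤ i.1) := by omega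
          simp only [h1, dif_neg, not_false_iff, if_neg h2]
        · intro i
          have hi := (hSmidmem i.1).mp i.2
          simp only [hi.1, hi.2, and_self, dite_true]
    -- d is in the set
    have hd_mem : d ∈ {m : ℕ | ∃ I : Finset (Fin n), I.card = m ∧
        Module.finrank F ↥(C₁ ⊓ VI F n I) ≥ Module.finrank F ↥(C₂ ⊓ VI F n I) + t} :=
      ⟨L, hLcard, by rw [hrank1, hrank2]; omega⟩
    -- every element of the set is ≥ d
    have hlb : ∀ m ∈ {m : ℕ | ∃ I : Finset (Fin n), I.card = m ∧
        Module.finrank F ↥(C₁ ⊓ VI F n I) ≥ Module.finrank F ↥(C₂ ⊓ VI F n I) + t},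
        d ≤ m := by
      rintro m ⟨I, rfl, hrank⟩
      by_cases hLI : L ⊆ I
      · rw [← hLcard]; exact Finset.card_le_card hLI
      · obtain ⟨j, hjL, hjI⟩ := Finset.not_subset.mp hLI
        have hja : a ≤ j.1 := (hLmem j).mp hjL
        by_cases hjmid : a + 1 ≤ j.1 ∧ j.1 < a + t
        · -- case B : j is strictly inside the band
          have ht2 : 2 ≤ t := by omega
          set S : Finset (Fin n) :=
            insert aF ((Finset.univ.filter
              (fun i : Fin n => a + 1 ≤ i.1 ∧ i.1 < a + t)).erase j) with hS
          have hScard : S.card ≤ t - 1 := by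
            calc S.card ≤ ((Finset.univ.filter
                (fun i : Fin n => a + 1 ≤ i.1 ∧ i.1 < a + t)).erase j).card + 1 :=
                  Finset.card_insert_le _ _
            _ ≤ t - 1 := by
                rw [Finset.card_erase_of_mem (by
                  simp only [Finset.mem_filter, Finset.mem_univ, true_and]; exact hjmid),
                  card_filter_band (by omega) hat]
                omega
          have hbound := finrank_le_of_res (C₁ ⊓ VI F n I) (C₂ ⊓ VI F n I) S ?_
          · omega
          · rintro x ⟨hx1, hxV⟩ hz
            have hxj : x j = 0 := (mem_VI.mp hxV) j hjI
            have hxa : x aF = 0 := hz aF (Finset.mem_insert_self _ _)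
            refine ⟨?_, hxV⟩
            intro i hi
            by_cases hi2 : i.1 < a + t
            · by_cases hia : i.1 = a
              · have : i = aF := Fin.ext hia
                rw [this]; exact hxa
              · by_cases hij : i = j
                · rw [hij]; exact hxj
                · refine hz i (Finset.mem_insert_of_mem (Finset.mem_erase.mpr ⟨hij, ?_⟩))
                  simp only [Finset.mem_filter, Finset.mem_univ, true_and]
                  omega
            · rw [hx1 i (by omega)]; exact hxa
        · -- case A : j = a or j ≥ a + t
          set S : Finset (Fin n) :=
            Finset.univ.filter (fun i : Fin n => a + 1 ≤ i.1 ∧ i.1 < a + t) with hS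
          have hScard : S.card = t - 1 := by
            rw [hS, card_filter_band (by omega) hat]; omega
          have hbound := finrank_le_of_res (C₁ ⊓ VI F n I) (C₂ ⊓ VI F n I) S ?_
          · omega
          · rintro x ⟨hx1, hxV⟩ hz
            have hxj : x j = 0 := (mem_VI.mp hxV) j hjI
            have hxa : x aF = 0 := by
              by_cases hja' : j.1 = a
              · have : j = aF := Fin.ext hja'
                rw [← this]; exact hxj
              · have hjt : a + t ≤ j.1 := by omega
                rw [← hx1 j hjt]; exact hxj
            refine ⟨?_, hxV⟩
            intro i hi
            by_cases hi2 : i.1 < a + t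
            · by_cases hia : i.1 = a
              · have : i = aF := Fin.ext hia
                rw [this]; exact hxa
              · refine hz i ?_
                simp only [hS, Finset.mem_filter, Finset.mem_univ, true_and]
                omega
            · rw [hx1 i (by omega)]; exact hxa
    rw [RGHW]
    exact le_antisymm (Nat.sInf_le hd_mem) (le_csInf ⟨d, hd_mem⟩ hlb)

end RGHWaux


/-- For any `t ≤ d ≤ n` there are nested codes with `dim C₁ = n + t - d`,
`dim C₂ = n - d` and `M_t(C₁,C₂) = d`; in particular for `d = ⌊nδ⌋`. -/
theorem exists_codes_rghw_floor (F : Type) [Field F] [Fintype F]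
    (n t d : ℕ) (ht : 1 ≤ t) (htd : t ≤ d) (hdn : d ≤ n) :
    (∃ C₁ C₂ : Submodule F (Fin n → F), C₂ ≤ C₁ ∧
      Module.finrank F C₁ = n + t - d ∧ Module.finrank F C₂ = n - d ∧
      RGHW F t C₁ C₂ = d) ∧
    (∀ δ : ℝ, 0 ≤ δ → δ ≤ 1 → t ≤ ⌊(n : ℝ) * δ⌋₊ →
      ∃ C₁ C₂ : Submodule F (Fin n → F), C₂ ≤ C₁ ∧
        Module.finrank F C₁ = n + t - ⌊(n : ℝ) * δ⌋₊ ∧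
        Module.finrank F C₂ = n - ⌊(n : ℝ) * δ⌋₊ ∧
        RGHW F t C₁ C₂ = ⌊(n : ℝ) * δ⌋₊) := by
  constructor
  · exact RGHWaux.main F n t d ht htd hdn
  · intro δ _ h1 htf
    have hfn : ⌊(n : ℝ) * δ⌋₊ ≤ n := by
      calc ⌊(n : ℝ) * δ⌋₊ ≤ ⌊(n : ℝ)⌋₊ :=
            Nat.floor_mono (mul_le_of_le_one_right (Nat.cast_nonneg n) h1)
        _ = n := Nat.floor_natCast n
    exact RGHWaux.main F n t _ ht htf hfn
end
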